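/- arXiv:2103.11621 — 4 statements merged into one kernel-verified Lean document; each statement's English description precedes it below -/
import Mathlib

section
/- Let X > 1 and set η = 0.076928, ρ = 0.23077, κ = 1.4999676, z = X^η, y = X^ρ. Suppose p is a prime with X/2 < p ≤ X−2 such that p+2 is squarefree, every prime factor of p+2 exceeds z, and κ · Σ_{q prime, z < q ≤ y, q | p+2} (1 − log q/log y) < 1. Then Ω(p+2) ≤ 4. -/
open Finset

theorem stmt3 (X : ℝ) (hX : 1 < X) (p : ℕ) (hp : p.Prime)
    (h1 : X / 2 < (p : ℝ)) (h2 : (p : ℝ) ≤ X - 2)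
    (hsf : Squarefree (p + 2))
    (hz : ∀ q : ℕ, q.Prime → q ∣ p + 2 → X ^ (0.076928 : ℝ) < (q : ℝ))
    (hκ : (1.4999676 : ℝ) *
        ∑ q ∈ (p + 2).primeFactors.filter
          (fun q : ℕ => X ^ (0.076928 : ℝ) < (q : ℝ) ∧ (q : ℝ) ≤ X ^ (0.23077 : ℝ)),
          (1 - Real.log q / Real.log (X ^ (0.23077 : ℝ))) < 1) :
    (p + 2).primeFactorsList.length ≤ 4 := by
  have hX0 : (0:ℝ) < X := lt_trans one_pos hX
  have hlX : 0 < Real.log X := Real.log_pos hX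
  set L : ℝ := Real.log (X ^ (0.23077 : ℝ)) with hLdef
  have hLval : L = 0.23077 * Real.log X := Real.log_rpow hX0 _
  have hL0 : 0 < L := by rw [hLval]; positivity
  set n := p + 2 with hn
  have hn0 : n ≠ 0 := by omega
  have hlen : n.primeFactorsList.length = n.primeFactors.card := by
    rw [Nat.primeFactors,
      List.toFinset_card_of_nodup ((Nat.squarefree_iff_nodup_primeFactorsList hn0).mp hsf)]
  rw [hlen]
  set S := n.primeFactors with hS
  have hprod : ∏ q ∈ S, (q:ℝ) = (n:ℝ) := by
    rw [← Nat.cast_prod]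
    exact_mod_cast congrArg (Nat.cast : ℕ → ℝ) (Nat.prod_primeFactors_of_squarefree hsf)
  have hsumlog : ∑ q ∈ S, Real.log q = Real.log n := by
    rw [← hprod, Real.log_prod]
    intro q hq
    exact_mod_cast (Nat.prime_of_mem_primeFactors hq).pos.ne'
  have hbig : ∀ q ∈ S.filter (fun q : ℕ => ¬ (X ^ (0.076928 : ℝ) < (q : ℝ) ∧ (q : ℝ) ≤ X ^ (0.23077 : ℝ))), (1:ℝ) ≤ Real.log q / L := by
    intro q hq
    simp only [mem_filter] at hq
    obtain ⟨hqS, hnP⟩ := hq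
    have hq' := Nat.prime_of_mem_primeFactors hqS
    have hzq := hz q hq' (Nat.dvd_of_mem_primeFactors hqS)
    have hy : X ^ (0.23077:ℝ) < (q:ℝ) := by
      by_contra h; push_neg at h; exact hnP ⟨hzq, h⟩
    rw [le_div_iff₀ hL0, one_mul]
    exact Real.log_le_log (Real.rpow_pos_of_pos hX0 _) hy.le
  -- sum over S of log q / L equals log n / L
  have hsumS : ∑ q ∈ S, Real.log q / L = Real.log n / L := by
    rw [← Finset.sum_div, hsumlog]
  have hsplit := Finset.sum_filter_add_sum_filter_not S (fun q : ℕ => X ^ (0.076928 : ℝ) < (q : ℝ) ∧ (q : ℝ) ≤ X ^ (0.23077 : ℝ)) (fun q => Real.log q / L)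
  have hcards := Finset.card_filter_add_card_filter_not (s := S) (p := fun q : ℕ => X ^ (0.076928 : ℝ) < (q : ℝ) ∧ (q : ℝ) ≤ X ^ (0.23077 : ℝ))
  have hA : ((S.filter (fun q : ℕ => X ^ (0.076928 : ℝ) < (q : ℝ) ∧ (q : ℝ) ≤ X ^ (0.23077 : ℝ))).card : ℝ)
      = (∑ q ∈ S.filter (fun q : ℕ => X ^ (0.076928 : ℝ) < (q : ℝ) ∧ (q : ℝ) ≤ X ^ (0.23077 : ℝ)), (1 - Real.log q / L)) + ∑ q ∈ S.filter (fun q : ℕ => X ^ (0.076928 : ℝ) < (q : ℝ) ∧ (q : ℝ) ≤ X ^ (0.23077 : ℝ)), Real.log q / L := by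
    rw [← Finset.sum_add_distrib]
    have h1s : ∀ q ∈ S.filter (fun q : ℕ => X ^ (0.076928 : ℝ) < (q : ℝ) ∧ (q : ℝ) ≤ X ^ (0.23077 : ℝ)), (1 - Real.log q / L) + Real.log q / L = (1:ℝ) := by
      intro q _; ring
    rw [Finset.sum_congr rfl h1s, Finset.sum_const, nsmul_eq_mul, mul_one]
  have hB : ((S.filter fun q : ℕ => ¬ (X ^ (0.076928 : ℝ) < (q : ℝ) ∧ (q : ℝ) ≤ X ^ (0.23077 : ℝ))).card : ℝ)
      ≤ ∑ q ∈ S.filter (fun q : ℕ => ¬(X ^ (0.076928 : ℝ) < (q : ℝ) ∧ (q : ℝ) ≤ X ^ (0.23077 : ℝ))), Real.log q / L := by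
    have hone : ((S.filter fun q : ℕ => ¬ (X ^ (0.076928 : ℝ) < (q : ℝ) ∧ (q : ℝ) ≤ X ^ (0.23077 : ℝ))).card : ℝ)
        = ∑ _q ∈ S.filter (fun q : ℕ => ¬(X ^ (0.076928 : ℝ) < (q : ℝ) ∧ (q : ℝ) ≤ X ^ (0.23077 : ℝ))), (1:ℝ) := by simp
    rw [hone]
    exact Finset.sum_le_sum hbig
  have hcard : (S.card : ℝ)
      ≤ (∑ q ∈ S.filter (fun q : ℕ => X ^ (0.076928 : ℝ) < (q : ℝ) ∧ (q : ℝ) ≤ X ^ (0.23077 : ℝ)), (1 - Real.log q / L)) + Real.log n / L := by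
    have : ((S.filter (fun q : ℕ => X ^ (0.076928 : ℝ) < (q : ℝ) ∧ (q : ℝ) ≤ X ^ (0.23077 : ℝ))).card : ℝ) + ((S.filter fun q : ℕ => ¬ (X ^ (0.076928 : ℝ) < (q : ℝ) ∧ (q : ℝ) ≤ X ^ (0.23077 : ℝ))).card : ℝ) = (S.card : ℝ) := by
      exact_mod_cast congrArg (Nat.cast : ℕ → ℝ) hcards
    rw [← hsumS, ← hsplit]
    linarith [hA, hB]
  -- bound log n / L
  have hnX : (n:ℝ) ≤ X := by
    have : (n:ℝ) = (p:ℝ) + 2 := by push_cast [hn]; ring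
    linarith
  have hn1 : (1:ℝ) ≤ (n:ℝ) := by
    have : 1 ≤ n := by omega
    exact_mod_cast this
  have hlognX : Real.log n ≤ Real.log X := Real.log_le_log (by linarith) hnX
  have hfrac : Real.log n / L ≤ 1 / 0.23077 := by
    rw [hLval, div_le_div_iff₀ (by positivity) (by norm_num)]
    nlinarith
  -- from hκ get the sum bound
  have hsum_lt : ∑ q ∈ S.filter (fun q : ℕ => X ^ (0.076928 : ℝ) < (q : ℝ) ∧ (q : ℝ) ≤ X ^ (0.23077 : ℝ)), (1 - Real.log q / L) < 1 / 1.4999676 := by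
    rw [lt_div_iff₀ (by norm_num)]
    linarith [hκ]
  have hfinal : (S.card : ℝ) < 5 := by
    have : (1:ℝ) / 1.4999676 + 1 / 0.23077 < 5 := by norm_num
    linarith
  have : S.card < 5 := by exact_mod_cast hfinal
  omega
end

section
/- Let δ = 0.307708, ρ = 0.23077, η = 0.076928, κ = 1.4999676 and s = δ/η. Then log(s−1)/s − κ·η·∫_η^ρ (1/u − 1/ρ)·(δ−u)^{−1} du ≥ 0.000032113949. -/
open Real Finset

private lemma expUB {q b : ℝ} (h0 : 0 ≤ q) (h1 : q ≤ 1)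
    (hb : (∑ m ∈ Finset.range 18, q ^ m / m.factorial) + q ^ 18 * (19 / 115242726703104000) ≤ b) :
    Real.exp q ≤ b := by
  have h := Real.exp_bound' h0 h1 (n := 18) (by norm_num)
  refine h.trans (le_trans (le_of_eq ?_) hb)
  have hf : ((18:ℕ).factorial : ℝ) = 6402373705728000 := by norm_num [Nat.factorial]
  rw [hf]
  push_cast
  ring

private lemma expLB {q b : ℝ} (h0 : 0 ≤ q) (h1 : q ≤ 1)
    (hb : b ≤ (∑ m ∈ Finset.range 18, q ^ m / m.factorial) - q ^ 18 * (19 / 115242726703104000)) :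
    b ≤ Real.exp q := by
  have h3 : |q| ≤ 1 := by rwa [abs_of_nonneg h0]
  have h := Real.exp_bound h3 (n := 18) (by norm_num)
  rw [abs_of_nonneg h0] at h
  have h2 := (abs_sub_le_iff.1 h).2
  have hf : ((18:ℕ).factorial : ℝ) = 6402373705728000 := by norm_num [Nat.factorial]
  have hs : ((18:ℕ).succ : ℝ) = 19 := by norm_num
  rw [hf, hs] at h2
  nlinarith [h2, hb]

private lemma exp_sq_le {q b r : ℝ} (hub : Real.exp q ≤ b) (hbr : b * b ≤ r) :
    Real.exp (q + q) ≤ r := by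
  rw [Real.exp_add]
  calc Real.exp q * Real.exp q ≤ b * b :=
        mul_le_mul hub hub (Real.exp_pos q).le ((Real.exp_pos q).le.trans hub)
    _ ≤ r := hbr

private lemma le_exp_sq {q b r : ℝ} (hb : 0 ≤ b) (hlb : b ≤ Real.exp q) (hbr : r ≤ b * b) :
    r ≤ Real.exp (q + q) := by
  rw [Real.exp_add]
  calc r ≤ b * b := hbr
    _ ≤ Real.exp q * Real.exp q := mul_le_mul hlb hlb hb (Real.exp_pos q).le

theorem stmt4 :
    (0.000032113949 : ℝ) ≤
      Real.log ((0.307708 : ℝ) / 0.076928 - 1) / ((0.307708 : ℝ) / 0.076928) -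
        1.4999676 * 0.076928 *
          ∫ u in (0.076928 : ℝ)..(0.23077 : ℝ), (1 / u - 1 / 0.23077) * (0.307708 - u)⁻¹ := by
  -- Step 1: evaluate the integral by FTC
  have hI : (∫ u in (0.076928 : ℝ)..(0.23077 : ℝ), (1 / u - 1 / 0.23077) * (0.307708 - u)⁻¹)
      = ((1/0.307708) * Real.log 0.23077 - (1/0.307708 - 1/0.23077) * Real.log (0.307708 - 0.23077))
        - ((1/0.307708) * Real.log 0.076928
            - (1/0.307708 - 1/0.23077) * Real.log (0.307708 - 0.076928)) := by
    have hle : (0.076928 : ℝ) ≤ 0.23077 := by norm_num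
    have huicc : Set.uIcc (0.076928 : ℝ) 0.23077 = Set.Icc 0.076928 0.23077 :=
      Set.uIcc_of_le hle
    apply intervalIntegral.integral_eq_sub_of_hasDerivAt
      (f := fun u : ℝ => (1/0.307708) * Real.log u
        - (1/0.307708 - 1/0.23077) * Real.log (0.307708 - u))
      (f' := fun u : ℝ => (1 / u - 1 / 0.23077) * (0.307708 - u)⁻¹)
    · intro u hu
      rw [huicc] at hu
      obtain ⟨hu1, hu2⟩ := hu
      have hu0 : (0:ℝ) < u := by linarith
      have hud : u < (0.307708 : ℝ) := by linarith
      have h1 : HasDerivAt (fun u : ℝ => (0.307708 : ℝ) - u) (-1) u := by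
        simpa using (hasDerivAt_id u).const_sub (0.307708 : ℝ)
      have hlog2 : HasDerivAt (fun u : ℝ => Real.log (0.307708 - u)) (-1 / (0.307708 - u)) u :=
        h1.log (by linarith)
      have hlog1 : HasDerivAt Real.log u⁻¹ u := Real.hasDerivAt_log (ne_of_gt hu0)
      have := (hlog1.const_mul ((1:ℝ)/0.307708)).sub
        (hlog2.const_mul ((1:ℝ)/0.307708 - 1/0.23077))
      convert this using 1
      · rfl
      have hne1 : u ≠ 0 := ne_of_gt hu0
      have hne2 : (0.307708 : ℝ) - u ≠ 0 := by intro h; apply absurd hud; linarith [h]; 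
      field_simp
      ring
    · apply ContinuousOn.intervalIntegrable
      apply ContinuousOn.mul
      · refine ContinuousOn.sub
          (continuousOn_const.div continuousOn_id fun u hu => ?_) continuousOn_const
        rw [huicc] at hu
        have h1 := hu.1
        intro h; rw [h] at h1; norm_num at h1
      · refine ContinuousOn.inv₀ (continuousOn_const.sub continuousOn_id) fun u hu => ?_
        rw [huicc] at hu
        have h2 := hu.2
        intro h
        have hx : u = (0.307708 : ℝ) := by linarith [sub_eq_zero.mp h]
        rw [hx] at h2; norm_num at h2
  rw [hI]
  -- Step 2: numeric bounds on the logarithms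
  -- L1 = log(57695/19232) ≥ c1
  have hb1 : Real.exp ((10985949562938339 : ℝ)/20000000000000000
      + (10985949562938339 : ℝ)/20000000000000000) ≤ 57695/19232 := by
    refine exp_sq_le (b := (866017898678743651326011 : ℝ)/500000000000000000000000) ?_ (by norm_num)
    apply expUB (by norm_num) (by norm_num)
    norm_num [Finset.sum_range_succ, Nat.factorial]
  have hL1 : (10985949562938339 : ℝ)/10000000000000000 ≤ Real.log (57695/19232) := by
    rw [Real.le_log_iff_exp_le (by norm_num)]
    calc Real.exp ((10985949562938339 : ℝ)/10000000000000000)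
        = Real.exp ((10985949562938339 : ℝ)/20000000000000000
          + (10985949562938339 : ℝ)/20000000000000000) := by norm_num
      _ ≤ 57695/19232 := hb1
  -- L2 = log(115385/38464) ≤ c2
  have hb2 : (115385 : ℝ)/38464 ≤ Real.exp ((5492758120219001 : ℝ)/10000000000000000
      + (5492758120219001 : ℝ)/10000000000000000) := by
    refine le_exp_sq (b := (8659991356299460623798393 : ℝ)/5000000000000000000000000)
      (by norm_num) ?_ (by norm_num)
    apply expLB (by norm_num) (by norm_num)
    norm_num [Finset.sum_range_succ, Nat.factorial]
  have hL2 : Real.log ((115385 : ℝ)/38464) ≤ (5492758120219001 : ℝ)/5000000000000000 := by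
    rw [Real.log_le_iff_le_exp (by norm_num)]
    calc (115385 : ℝ)/38464
        ≤ Real.exp ((5492758120219001 : ℝ)/10000000000000000
          + (5492758120219001 : ℝ)/10000000000000000) := hb2
      _ = Real.exp ((5492758120219001 : ℝ)/5000000000000000) := by norm_num
  -- L3 = log(38469/115390) ≤ c3, i.e. -c3 ≤ log(115390/38469)
  have hb3 : Real.exp ((10984649730614879 : ℝ)/20000000000000000
      + (10984649730614879 : ℝ)/20000000000000000) ≤ 115390/38469 := by
    refine exp_sq_le (b := (17319232332096501161046337 : ℝ)/10000000000000000000000000) ?_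
      (by norm_num)
    apply expUB (by norm_num) (by norm_num)
    norm_num [Finset.sum_range_succ, Nat.factorial]
  have hL3 : Real.log ((38469 : ℝ)/115390) ≤ -((10984649730614879 : ℝ)/10000000000000000) := by
    have h : (10984649730614879 : ℝ)/10000000000000000 ≤ Real.log (115390/38469) := by
      rw [Real.le_log_iff_exp_le (by norm_num)]
      calc Real.exp ((10984649730614879 : ℝ)/10000000000000000)
          = Real.exp ((10984649730614879 : ℝ)/20000000000000000
            + (10984649730614879 : ℝ)/20000000000000000) := by norm_num
        _ ≤ 115390/38469 := hb3
    have hinv : Real.log ((38469 : ℝ)/115390) = -Real.log ((115390 : ℝ)/38469) := by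
      rw [show ((38469 : ℝ)/115390) = ((115390 : ℝ)/38469)⁻¹ by norm_num, Real.log_inv]
    rw [hinv]
    linarith [h]
  -- Step 3: relate the logs in the goal to the bounded logs
  have e1 : Real.log ((0.307708 : ℝ) / 0.076928 - 1) = Real.log (57695/19232) := by
    norm_num
  have e2 : Real.log (0.23077 : ℝ) - Real.log (0.076928 : ℝ) = Real.log ((115385 : ℝ)/38464) := by
    rw [← Real.log_div (by norm_num) (by norm_num)]
    norm_num
  have e3 : Real.log ((0.307708 : ℝ) - 0.23077) - Real.log ((0.307708 : ℝ) - 0.076928)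
      = Real.log ((38469 : ℝ)/115390) := by
    rw [← Real.log_div (by norm_num) (by norm_num)]
    norm_num
  rw [e1]
  rw [show Real.log ((57695:ℝ)/19232) / ((0.307708:ℝ)/0.076928)
    = (19232/76927) * Real.log ((57695:ℝ)/19232) by
      rw [div_eq_mul_inv, show (((0.307708:ℝ)/0.076928))⁻¹ = 19232/76927 by norm_num]; ring]
  linarith [hL1, hL2, hL3, e2, e3]
end

section
/- Let M ≤ N < N₁ ≤ M₁ be real numbers and let a_n be complex numbers defined for integers n with M < n ≤ M₁. Then |Σ_{N < n ≤ N₁} a_n| ≤ ∫_{−∞}^{+∞} K(θ)·|Σ_{M < m ≤ M₁} a_m·e(θm)| dθ, where K(θ) = min(M₁ − M + 1, 1/(π|θ|), 1/(π²θ²)). Moreover, ∫_{−∞}^{+∞} K(θ) dθ ≤ 3·log(2 + M₁ − M). -/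
set_option maxHeartbeats 1000000

noncomputable section AuxStmt7

open Finset Real MeasureTheory Set Complex FourierTransform

lemma integrable_comp_abs' {f : ℝ → ℝ} (hf : IntegrableOn (fun x => f |x|) (Ici 0)) :
    Integrable fun x : ℝ => f |x| := by
  have h2 : IntegrableOn (fun x => f |x|) (Iic 0) := by
    rw [← Measure.map_neg_eq_self (volume : Measure ℝ)]
    have m : MeasurableEmbedding fun x : ℝ => -x := (Homeomorph.neg ℝ).measurableEmbedding
    rw [m.integrableOn_map_iff]
    simp_rw [Function.comp_def, abs_neg, neg_preimage, neg_Iic, neg_zero]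
    exact hf
  rw [← integrableOn_univ, ← Set.Iic_union_Ici (a := (0:ℝ))]
  exact h2.union hf

lemma w_meas (c : ℝ) : Measurable (fun θ : ℝ => min c (1 / (π ^ 2 * θ ^ 2))) := by
  apply Measurable.min measurable_const
  exact (measurable_const.div ((measurable_const.mul (measurable_id.pow_const 2))))

lemma w_int {c : ℝ} (hc : 0 ≤ c) : Integrable (fun θ : ℝ => min c (1 / (π ^ 2 * θ ^ 2))) := by
  have habs : ∀ θ : ℝ, min c (1 / (π ^ 2 * |θ| ^ 2)) = min c (1 / (π ^ 2 * θ ^ 2)) := by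
    intro θ; rw [_root_.sq_abs]
  have h0 : ∀ θ : ℝ, 0 ≤ min c (1 / (π ^ 2 * θ ^ 2)) := by
    intro θ
    exact le_min hc (by positivity)
  have key : IntegrableOn (fun θ : ℝ => min c (1 / (π ^ 2 * θ ^ 2))) (Ici 0) := by
    rw [← Icc_union_Ioi_eq_Ici (le_of_lt one_pos)]
    apply IntegrableOn.union
    · apply Integrable.mono' (integrableOn_const measure_Icc_lt_top.ne)
        ((w_meas c).aestronglyMeasurable.restrict)
      filter_upwards with θ
      rw [Real.norm_eq_abs, _root_.abs_of_nonneg (h0 θ)]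
      exact min_le_left _ _
    · apply Integrable.mono' (integrableOn_Ioi_rpow_of_lt (by norm_num : (-2:ℝ) < -1) one_pos)
        ((w_meas c).aestronglyMeasurable.restrict)
      filter_upwards [ae_restrict_mem measurableSet_Ioi] with θ hθ
      have hθ0 : (0:ℝ) < θ := lt_trans one_pos hθ
      rw [Real.norm_eq_abs, _root_.abs_of_nonneg (h0 θ)]
      refine le_trans (min_le_right _ _) ?_
      rw [Real.rpow_neg hθ0.le]
      rw [show ((2:ℝ)) = ((2:ℕ):ℝ) by norm_num, Real.rpow_natCast]
      rw [one_div]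
      apply inv_anti₀ (by positivity)
      nlinarith [mul_nonneg (by nlinarith [pi_gt_three] : (0:ℝ) ≤ π^2 - 1) (sq_nonneg θ)]
  have := integrable_comp_abs' (f := fun r => min c (1 / (π ^ 2 * r ^ 2)))
    (by simpa only [habs] using key)
  simpa only [habs] using this

lemma K_meas (P : ℝ) :
    Measurable (fun θ : ℝ => min P (min (1 / (π * |θ|)) (1 / (π ^ 2 * θ ^ 2)))) := by
  apply Measurable.min measurable_const
  apply Measurable.min
  · exact measurable_const.div (measurable_const.mul measurable_abs)
  · exact measurable_const.div (measurable_const.mul (measurable_id.pow_const 2))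

lemma K_nonneg {P : ℝ} (hP : 0 ≤ P) (θ : ℝ) :
    0 ≤ min P (min (1 / (π * |θ|)) (1 / (π ^ 2 * θ ^ 2))) :=
  le_min hP (le_min (by positivity) (by positivity))

lemma K_int {P : ℝ} (hP : 0 ≤ P) :
    Integrable (fun θ : ℝ => min P (min (1 / (π * |θ|)) (1 / (π ^ 2 * θ ^ 2)))) := by
  apply (w_int hP).mono' (K_meas P).aestronglyMeasurable
  filter_upwards with θ
  rw [Real.norm_eq_abs, _root_.abs_of_nonneg (K_nonneg hP θ)]
  exact min_le_min le_rfl (min_le_right _ _)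

lemma part2 {P : ℝ} (hP : 1 ≤ P) :
    (∫ θ : ℝ, min P (min (1 / (π * |θ|)) (1 / (π ^ 2 * θ ^ 2)))) ≤ 3 * Real.log (1 + P) := by
  have hP0 : (0:ℝ) < P := lt_of_lt_of_le one_pos hP
  set K : ℝ → ℝ := fun θ => min P (min (1 / (π * |θ|)) (1 / (π ^ 2 * θ ^ 2))) with hKdef
  set s : ℝ := (π * P)⁻¹ with hsdef
  set t : ℝ := π⁻¹ with htdef
  have hs : 0 < s := by positivity
  have ht : 0 < t := by positivity
  have hst : s ≤ t := by
    rw [hsdef, htdef]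
    apply inv_anti₀ pi_pos
    nlinarith [pi_pos]
  have hK_int : Integrable K := K_int hP0.le
  -- whole line = 2 * Ioi 0
  have habs : (fun θ : ℝ => min P (min (1 / (π * |θ|)) (1 / (π ^ 2 * |θ| ^ 2)))) = K := by
    funext θ; rw [hKdef]; rw [_root_.sq_abs]
  have h2 : (∫ θ : ℝ, K θ) =
      2 * ∫ r in Ioi (0:ℝ), min P (min (1 / (π * r)) (1 / (π ^ 2 * r ^ 2))) := by
    rw [← integral_comp_abs (f := fun r => min P (min (1 / (π * r)) (1 / (π ^ 2 * r ^ 2)))), habs]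
  have hEq : ∀ r ∈ Ioi (0:ℝ), min P (min (1 / (π * r)) (1 / (π ^ 2 * r ^ 2))) = K r := by
    intro r hr
    rw [hKdef]
    simp only []
    rw [_root_.abs_of_pos hr]
  have h3 : (∫ r in Ioi (0:ℝ), min P (min (1 / (π * r)) (1 / (π ^ 2 * r ^ 2)))) =
      ∫ r in Ioi (0:ℝ), K r :=
    setIntegral_congr_fun measurableSet_Ioi hEq
  -- split
  have hsplit : (∫ r in Ioi (0:ℝ), K r) =
      (∫ r in Ioc 0 s, K r) + (∫ r in Ioc s t, K r) + ∫ r in Ioi t, K r := by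
    rw [← setIntegral_union (Set.Ioc_disjoint_Ioc_of_le le_rfl) measurableSet_Ioc
      hK_int.integrableOn hK_int.integrableOn,
      Set.Ioc_union_Ioc_eq_Ioc hs.le hst,
      ← setIntegral_union (Set.Ioc_disjoint_Ioi le_rfl) measurableSet_Ioi
      hK_int.integrableOn hK_int.integrableOn,
      Set.Ioc_union_Ioi_eq_Ioi ht.le]
  -- piece 1
  have hp1 : (∫ r in Ioc (0:ℝ) s, K r) ≤ 1/π := by
    have hm : (∫ r in Ioc (0:ℝ) s, K r) ≤ ∫ _ in Ioc (0:ℝ) s, P :=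
      setIntegral_mono_on hK_int.integrableOn (integrableOn_const measure_Ioc_lt_top.ne)
        measurableSet_Ioc (fun x _ => min_le_left _ _)
    refine le_trans hm ?_
    rw [setIntegral_const, Real.volume_real_Ioc_of_le hs.le, smul_eq_mul]
    rw [sub_zero, hsdef]
    have : (π * P)⁻¹ * P = 1/π := by
      rw [inv_mul_eq_div, mul_comm, ← div_div, div_self hP0.ne']
    rw [this]
  -- piece 2
  have hcont : IntegrableOn (fun r : ℝ => 1/(π * r)) (Ioc s t) := by
    apply (ContinuousOn.integrableOn_Icc ?_).mono_set Set.Ioc_subset_Icc_self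
    apply ContinuousOn.div continuousOn_const (continuousOn_const.mul continuousOn_id)
    intro x hx
    have : 0 < x := lt_of_lt_of_le hs hx.1
    exact mul_ne_zero pi_ne_zero this.ne'
  have hp2 : (∫ r in Ioc s t, K r) ≤ 1/π * Real.log P := by
    have hm : (∫ r in Ioc s t, K r) ≤ ∫ r in Ioc s t, 1/(π * r) := by
      apply setIntegral_mono_on hK_int.integrableOn hcont measurableSet_Ioc
      intro x hx
      have hx0 : 0 < x := lt_trans hs hx.1
      calc K x ≤ 1 / (π * |x|) := le_trans (min_le_right _ _) (min_le_left _ _)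
        _ = 1 / (π * x) := by rw [_root_.abs_of_pos hx0]
    refine le_trans hm (le_of_eq ?_)
    rw [← intervalIntegral.integral_of_le hst]
    have : ∀ x : ℝ, 1/(π*x) = (1/π) * (1/x) := by intro x; field_simp
    simp_rw [this]
    rw [intervalIntegral.integral_const_mul, integral_one_div
      (Set.notMem_uIcc_of_lt hs ht)]
    congr 1
    simp only [htdef, hsdef, div_eq_mul_inv, inv_inv]
    rw [show π⁻¹ * (π * P) = P by field_simp]
  -- piece 3
  have hint3 : IntegrableOn (fun x : ℝ => 1/π^2 * x ^ (-2:ℝ)) (Ioi t) :=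
    (integrableOn_Ioi_rpow_of_lt (by norm_num) ht).const_mul _
  have hp3 : (∫ r in Ioi t, K r) ≤ 1/π := by
    have hm : (∫ r in Ioi t, K r) ≤ ∫ x in Ioi t, 1/π^2 * x ^ (-2:ℝ) := by
      apply setIntegral_mono_on hK_int.integrableOn hint3 measurableSet_Ioi
      intro x hx
      have hx0 : 0 < x := lt_trans ht hx
      calc K x ≤ 1 / (π^2 * x^2) := le_trans (min_le_right _ _) (min_le_right _ _)
        _ = 1/π^2 * x ^ (-2:ℝ) := by
          rw [Real.rpow_neg hx0.le, show ((2:ℝ)) = ((2:ℕ):ℝ) by norm_num, Real.rpow_natCast]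
          field_simp
    refine le_trans hm (le_of_eq ?_)
    rw [MeasureTheory.integral_const_mul, integral_Ioi_rpow_of_lt (by norm_num) ht]
    rw [htdef]
    rw [show (-2:ℝ) + 1 = -1 by norm_num, Real.rpow_neg_one, inv_inv]
    field_simp
  -- combine
  have hlogP : Real.log P ≤ Real.log (1 + P) := Real.log_le_log hP0 (by linarith)
  have hlog2 : Real.log 2 ≤ Real.log (1 + P) := Real.log_le_log two_pos (by linarith)
  have hl2 : (0.6931471803 : ℝ) < Real.log 2 := Real.log_two_gt_d9
  have hpi : (3:ℝ) < π := pi_gt_three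
  have htot : (∫ θ : ℝ, K θ) ≤ 2 * (1/π + 1/π * Real.log P + 1/π) := by
    rw [h2, h3, hsplit]; linarith
  have hlogPnn : 0 ≤ Real.log P := Real.log_nonneg hP
  refine le_trans htot ?_
  have h1L : (0.69:ℝ) ≤ Real.log (1 + P) := by linarith
  have e1 : 1/π ≤ 1/3 := by
    rw [div_le_div_iff₀ pi_pos (by norm_num)]; linarith
  have e2 : (0:ℝ) ≤ 1/π := by positivity
  linarith [mul_le_mul_of_nonneg_right e1 hlogPnn, hlogP, h1L, hlogPnn, e1, e2,
    mul_nonneg e2 hlogPnn]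

def TT (A B : ℤ) (x : ℝ) : ℝ :=
  max 0 (min ((B:ℝ) + 1/2) (x + 1/2) - max ((A:ℝ) - 1/2) (x - 1/2))

lemma TT_nonneg (A B : ℤ) (x : ℝ) : 0 ≤ TT A B x := le_max_left _ _

lemma TT_le_one (A B : ℤ) (x : ℝ) : TT A B x ≤ 1 := by
  unfold TT
  apply max_le (by norm_num)
  have h1 : min ((B:ℝ) + 1/2) (x + 1/2) ≤ x + 1/2 := min_le_right _ _
  have h2 : x - 1/2 ≤ max ((A:ℝ) - 1/2) (x - 1/2) := le_max_right _ _
  linarith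

lemma TT_eq_zero {A B : ℤ} {x : ℝ} (hx : x ≤ (A:ℝ) - 1 ∨ (B:ℝ) + 1 ≤ x) : TT A B x = 0 := by
  unfold TT
  rcases hx with hx | hx
  · apply max_eq_left
    have h1 : min ((B:ℝ) + 1/2) (x + 1/2) ≤ x + 1/2 := min_le_right _ _
    have h2 : (A:ℝ) - 1/2 ≤ max ((A:ℝ) - 1/2) (x - 1/2) := le_max_left _ _
    linarith
  · apply max_eq_left
    have h1 : min ((B:ℝ) + 1/2) (x + 1/2) ≤ (B:ℝ) + 1/2 := min_le_left _ _
    have h2 : x - 1/2 ≤ max ((A:ℝ) - 1/2) (x - 1/2) := le_max_right _ _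
    linarith

lemma TT_eq_one {A B : ℤ} {x : ℝ} (h1 : (A:ℝ) ≤ x) (h2 : x ≤ (B:ℝ)) : TT A B x = 1 := by
  unfold TT
  have e1 : min ((B:ℝ)+1/2) (x+1/2) = x + 1/2 := min_eq_right (by linarith)
  have e2 : max ((A:ℝ)-1/2) (x-1/2) = x - 1/2 := max_eq_right (by linarith)
  rw [e1, e2]
  norm_num

lemma TT_int_val (A B : ℤ) (m : ℤ) :
    (TT A B m : ℝ) = if m ∈ Finset.Icc A B then 1 else 0 := by
  by_cases h : m ∈ Finset.Icc A B
  · rw [if_pos h]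
    rw [Finset.mem_Icc] at h
    exact TT_eq_one (by exact_mod_cast h.1) (by exact_mod_cast h.2)
  · rw [if_neg h]
    rw [Finset.mem_Icc, not_and_or, not_le, not_le] at h
    apply TT_eq_zero
    rcases h with h | h
    · left
      have : m ≤ A - 1 := by omega
      calc (m:ℝ) ≤ ((A-1 : ℤ) : ℝ) := by exact_mod_cast this
        _ = (A:ℝ) - 1 := by push_cast; ring
    · right
      have : B + 1 ≤ m := by omega
      calc (B:ℝ) + 1 = ((B+1 : ℤ) : ℝ) := by push_cast; ring
        _ ≤ (m:ℝ) := by exact_mod_cast this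

def TCc (A B : ℤ) (x : ℝ) : ℂ := (TT A B x : ℂ)

lemma TCc_cont (A B : ℤ) : Continuous (TCc A B) := by
  apply Complex.continuous_ofReal.comp
  unfold TT
  fun_prop

lemma TCc_int (A B : ℤ) : Integrable (TCc A B) := by
  have hmaj : Integrable (Set.indicator (Icc ((A:ℝ)-1) ((B:ℝ)+1)) (fun _ => (1:ℝ))) := by
    rw [integrable_indicator_iff measurableSet_Icc]
    exact integrableOn_const measure_Icc_lt_top.ne
  apply Integrable.mono' hmaj ((TCc_cont A B).aestronglyMeasurable)
  filter_upwards with x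
  rw [TCc, Complex.norm_real, Real.norm_eq_abs, _root_.abs_of_nonneg (TT_nonneg A B x)]
  by_cases hx : x ∈ Icc ((A:ℝ)-1) ((B:ℝ)+1)
  · rw [Set.indicator_of_mem hx]
    exact TT_le_one A B x
  · rw [Set.indicator_of_notMem hx]
    rw [Set.mem_Icc, not_and_or, not_le, not_le] at hx
    rw [TT_eq_zero (by rcases hx with h | h; exacts [Or.inl h.le, Or.inr h.le])]

def cc (θ : ℝ) : ℂ := ((-2 * π * θ : ℝ) : ℂ) * Complex.I

def GG (a b θ : ℝ) : ℂ := ∫ y in Set.Icc a b, Complex.exp (cc θ * y)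

lemma cc_mul (θ y : ℝ) : cc θ * (y:ℂ) = ((-2*π*θ*y : ℝ) : ℂ) * Complex.I := by
  unfold cc; push_cast; ring

lemma norm_exp_cc (θ y : ℝ) : ‖Complex.exp (cc θ * y)‖ = 1 := by
  rw [cc_mul, Complex.norm_exp_ofReal_mul_I]

lemma cc_ne {θ : ℝ} (hθ : θ ≠ 0) : cc θ ≠ 0 := by
  unfold cc
  simp only [ne_eq, mul_eq_zero, Complex.I_ne_zero, or_false, Complex.ofReal_eq_zero]
  intro h
  rcases h with (h'' | h'') | h'
  · norm_num at h''
  · exact pi_ne_zero h''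
  · exact hθ h'

lemma norm_cc (θ : ℝ) : ‖cc θ‖ = 2 * π * |θ| := by
  unfold cc
  rw [norm_mul, Complex.norm_I, mul_one, Complex.norm_real, Real.norm_eq_abs]
  rw [abs_mul, abs_mul]
  rw [abs_of_nonpos (by norm_num : (-2:ℝ) ≤ 0), _root_.abs_of_nonneg pi_pos.le]
  norm_num

lemma GG_interval {a b θ : ℝ} (hab : a ≤ b) :
    GG a b θ = ∫ y in a..b, Complex.exp (cc θ * y) := by
  rw [GG, intervalIntegral.integral_of_le hab, integral_Icc_eq_integral_Ioc]

lemma GG_norm_le_length {a b θ : ℝ} (hab : a ≤ b) : ‖GG a b θ‖ ≤ b - a := by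
  rw [GG_interval hab]
  have := intervalIntegral.norm_integral_le_of_norm_le_const
    (a := a) (b := b) (C := 1) (f := fun y : ℝ => Complex.exp (cc θ * y))
    (fun x _ => le_of_eq (norm_exp_cc θ x))
  rwa [one_mul, _root_.abs_of_nonneg (show (0:ℝ) ≤ b - a by linarith)] at this

lemma GG_norm_le_inv {a b θ : ℝ} (hab : a ≤ b) (hθ : θ ≠ 0) :
    ‖GG a b θ‖ ≤ 1 / (π * |θ|) := by
  rw [GG_interval hab]
  rw [integral_exp_mul_complex (cc_ne hθ)]
  rw [norm_div, norm_cc]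
  have hnum : ‖Complex.exp (cc θ * b) - Complex.exp (cc θ * a)‖ ≤ 2 := by
    calc ‖Complex.exp (cc θ * b) - Complex.exp (cc θ * a)‖
        ≤ ‖Complex.exp (cc θ * b)‖ + ‖Complex.exp (cc θ * a)‖ := norm_sub_le _ _
      _ = 2 := by rw [norm_exp_cc, norm_exp_cc]; norm_num
  have hden : (0:ℝ) < 2 * π * |θ| := by
    have : 0 < |θ| := abs_pos.2 hθ
    positivity
  rw [div_le_div_iff₀ hden (by positivity)]
  calc ‖Complex.exp (cc θ * b) - Complex.exp (cc θ * a)‖ * (π * |θ|)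
      ≤ 2 * (π * |θ|) := by
        apply mul_le_mul_of_nonneg_right hnum (by positivity)
    _ = 1 * (2 * π * |θ|) := by ring

lemma indicator_norm_le_one (s : Set ℝ) (y : ℝ) : ‖s.indicator (fun _ => (1:ℂ)) y‖ ≤ 1 := by
  by_cases h : y ∈ s <;> simp [h]

lemma mul_indicator_one (s : Set ℝ) (hs : MeasurableSet s) (c : ℝ → ℂ) :
    (∫ y, c y * s.indicator (fun _ => (1:ℂ)) y) = ∫ y in s, c y := by
  rw [← integral_indicator hs]
  congr 1
  funext y
  by_cases h : y ∈ s <;> simp [h]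

lemma TCc_eq_conv (A B : ℤ) (x : ℝ) :
    TCc A B x = ∫ y, (Icc ((A:ℝ)-1/2) ((B:ℝ)+1/2)).indicator (fun _ => (1:ℂ)) y *
      (Icc (-(1/2):ℝ) (1/2)).indicator (fun _ => (1:ℂ)) (x - y) := by
  have key : ∀ y : ℝ, (Icc ((A:ℝ)-1/2) ((B:ℝ)+1/2)).indicator (fun _ => (1:ℂ)) y *
      (Icc (-(1/2):ℝ) (1/2)).indicator (fun _ => (1:ℂ)) (x - y)
      = (Icc ((A:ℝ)-1/2) ((B:ℝ)+1/2) ∩ Icc (x - 1/2) (x + 1/2)).indicator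
          (fun _ => (1:ℂ)) y := by
    intro y
    by_cases h1 : y ∈ Icc ((A:ℝ)-1/2) ((B:ℝ)+1/2)
    · by_cases h2 : x - y ∈ Icc (-(1/2):ℝ) (1/2)
      · have h2' : y ∈ Icc (x - 1/2) (x + 1/2) := by
          rw [Set.mem_Icc] at h2 ⊢
          constructor <;> linarith [h2.1, h2.2]
        rw [Set.indicator_of_mem h1, Set.indicator_of_mem h2,
            Set.indicator_of_mem (Set.mem_inter h1 h2'), one_mul]
      · have h2' : y ∉ Icc (x - 1/2) (x + 1/2) := by
          rw [Set.mem_Icc] at h2 ⊢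
          intro hc
          exact h2 ⟨by linarith [hc.2], by linarith [hc.1]⟩
        rw [Set.indicator_of_notMem h2, mul_zero]
        exact (Set.indicator_of_notMem (fun hc => h2' (Set.mem_of_mem_inter_right hc)) _).symm
    · rw [Set.indicator_of_notMem h1, zero_mul]
      exact (Set.indicator_of_notMem (fun hc => h1 (Set.mem_of_mem_inter_left hc)) _).symm
  simp_rw [key]
  rw [Set.Icc_inter_Icc]
  rw [integral_indicator_const (1:ℂ) measurableSet_Icc]
  rw [Real.volume_real_Icc, TCc, TT, max_comm]
  rw [Complex.real_smul, mul_one]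

lemma fourier_TCc (A B : ℤ) (θ : ℝ) :
    𝓕 (TCc A B) θ =
      GG ((A:ℝ)-1/2) ((B:ℝ)+1/2) θ * GG (-(1/2)) (1/2) θ := by
  set a1 : ℝ := (A:ℝ) - 1/2 with ha1
  set b1 : ℝ := (B:ℝ) + 1/2 with hb1
  set g : ℝ → ℂ := (Icc a1 b1).indicator (fun _ => (1:ℂ)) with hg
  set h : ℝ → ℂ := (Icc (-(1/2):ℝ) (1/2)).indicator (fun _ => (1:ℂ)) with hh
  have step0 : 𝓕 (TCc A B) θ = ∫ x : ℝ, Complex.exp (cc θ * x) * TCc A B x := by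
    rw [Real.fourier_real_eq]
    congr 1; funext x
    rw [Circle.smul_def, Real.fourierChar_apply]
    congr 1
    rw [cc]; push_cast; ring
  have hg_meas : Measurable g := measurable_const.indicator measurableSet_Icc
  have hh_meas : Measurable h := measurable_const.indicator measurableSet_Icc
  have hmeas : AEStronglyMeasurable
      (fun p : ℝ × ℝ => Complex.exp (cc θ * p.1) * (g p.2 * h (p.1 - p.2)))
      ((volume : Measure ℝ).prod (volume : Measure ℝ)) := by
    apply Measurable.aestronglyMeasurable
    apply Measurable.mul
    · exact Complex.measurable_exp.comp
        (measurable_const.mul (Complex.measurable_ofReal.comp measurable_fst))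
    · exact (hg_meas.comp measurable_snd).mul
        (hh_meas.comp (measurable_fst.sub measurable_snd))
  have hbound_int : Integrable ((Icc (a1-1/2) (b1+1/2) ×ˢ Icc a1 b1).indicator
      (fun _ => (1:ℝ))) ((volume : Measure ℝ).prod (volume : Measure ℝ)) := by
    rw [integrable_indicator_iff (measurableSet_Icc.prod measurableSet_Icc)]
    refine integrableOn_const (ne_of_lt ?_)
    rw [Measure.prod_prod]
    exact ENNReal.mul_lt_top measure_Icc_lt_top measure_Icc_lt_top
  have hProdInt : Integrable (fun p : ℝ × ℝ => Complex.exp (cc θ * p.1) * (g p.2 * h (p.1 - p.2)))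
      ((volume : Measure ℝ).prod (volume : Measure ℝ)) := by
    apply Integrable.mono' hbound_int hmeas
    filter_upwards with p
    by_cases hp : p ∈ Icc (a1-1/2) (b1+1/2) ×ˢ Icc a1 b1
    · rw [Set.indicator_of_mem hp]
      rw [norm_mul, norm_exp_cc, one_mul, norm_mul]
      calc ‖g p.2‖ * ‖h (p.1-p.2)‖ ≤ 1 * 1 :=
            mul_le_mul (indicator_norm_le_one _ _) (indicator_norm_le_one _ _)
              (norm_nonneg _) zero_le_one
        _ = 1 := one_mul 1
    · rw [Set.indicator_of_notMem hp]
      rw [Set.mem_prod, not_and_or] at hp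
      have hzero : g p.2 * h (p.1 - p.2) = 0 := by
        rcases hp with hp | hp
        · by_cases hp2 : p.2 ∈ Icc a1 b1
          · have hnot : p.1 - p.2 ∉ Icc (-(1/2):ℝ) (1/2) := by
              rw [Set.mem_Icc] at hp2
              intro hmem
              rw [Set.mem_Icc] at hmem
              apply hp
              rw [Set.mem_Icc, ha1, hb1]
              rw [ha1, hb1] at hp2
              constructor <;> linarith [hp2.1, hp2.2, hmem.1, hmem.2]
            rw [hh, Set.indicator_of_notMem hnot, mul_zero]
          · rw [hg, Set.indicator_of_notMem hp2, zero_mul]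
        · rw [hg, Set.indicator_of_notMem hp, zero_mul]
      rw [hzero, mul_zero, norm_zero]
  rw [step0]
  have conv : ∀ x : ℝ, TCc A B x = ∫ y, g y * h (x - y) := TCc_eq_conv A B
  calc (∫ x : ℝ, Complex.exp (cc θ * x) * TCc A B x)
      = ∫ x : ℝ, ∫ y : ℝ, Complex.exp (cc θ * x) * (g y * h (x - y)) := by
        congr 1; funext x
        rw [conv x]
        exact (MeasureTheory.integral_const_mul _ _).symm
    _ = ∫ y : ℝ, ∫ x : ℝ, Complex.exp (cc θ * x) * (g y * h (x - y)) := by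
        apply MeasureTheory.integral_integral_swap
        exact hProdInt
    _ = ∫ y : ℝ, g y * (Complex.exp (cc θ * y) * GG (-(1/2)) (1/2) θ) := by
        congr 1; funext y
        have e1 : ∀ x : ℝ, Complex.exp (cc θ * x) * (g y * h (x - y))
            = g y * (Complex.exp (cc θ * x) * h (x - y)) := fun x => by ring
        simp_rw [e1]
        rw [MeasureTheory.integral_const_mul]
        congr 1
        have e2 := MeasureTheory.integral_add_right_eq_self (μ := volume)
          (fun x : ℝ => Complex.exp (cc θ * x) * h (x - y)) y
        simp only [add_sub_cancel_right] at e2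
        rw [← e2]
        have e3 : ∀ u : ℝ, Complex.exp (cc θ * ((u : ℝ) + (y:ℝ) : ℝ)) * h u
            = Complex.exp (cc θ * y) * (Complex.exp (cc θ * u) * h u) := by
          intro u
          rw [show (((u:ℝ) + (y:ℝ) : ℝ) : ℂ) = (u:ℂ) + (y:ℂ) by push_cast; ring,
            mul_add, Complex.exp_add]
          ring
        simp_rw [e3]
        rw [MeasureTheory.integral_const_mul]
        congr 1
        rw [GG]
        exact mul_indicator_one _ measurableSet_Icc _
    _ = (∫ y : ℝ, g y * Complex.exp (cc θ * y)) * GG (-(1/2)) (1/2) θ := by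
        rw [← MeasureTheory.integral_mul_const]
        congr 1; funext y; ring
    _ = GG a1 b1 θ * GG (-(1/2)) (1/2) θ := by
        congr 1
        rw [GG, ← mul_indicator_one (Icc a1 b1) measurableSet_Icc
          (fun y => Complex.exp (cc θ * y))]
        congr 1
        funext y
        exact mul_comm _ _

lemma ae_ne_zero : ∀ᵐ θ : ℝ, θ ≠ (0:ℝ) := by
  rw [MeasureTheory.ae_iff]
  simp only [not_not]
  simpa using Real.volume_singleton (a := 0)

lemma part1 (A B Alo Bhi : ℤ) (hAB : A ≤ B) (hAlo : Alo ≤ A) (hBhi : B ≤ Bhi)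
    {P : ℝ} (hL : (B:ℝ) - (A:ℝ) + 1 ≤ P) (a : ℤ → ℂ) :
    ‖∑ n ∈ Finset.Icc A B, a n‖ ≤
      ∫ θ : ℝ, (min P (min (1 / (π * |θ|)) (1 / (π ^ 2 * θ ^ 2)))) *
        ‖∑ m ∈ Finset.Icc Alo Bhi, a m * Complex.exp (2 * π * Complex.I * (θ * (m : ℝ)))‖ := by
  have hABr : (A:ℝ) ≤ (B:ℝ) := by exact_mod_cast hAB
  have hab : ((A:ℝ) - 1/2) ≤ ((B:ℝ) + 1/2) := by linarith
  have hP0 : (0:ℝ) ≤ P := by linarith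
  set K : ℝ → ℝ := fun θ => min P (min (1 / (π * |θ|)) (1 / (π ^ 2 * θ ^ 2))) with hKdef
  set F : ℝ → ℂ := fun θ => ∑ m ∈ Finset.Icc Alo Bhi,
    a m * Complex.exp (2*(π:ℂ)*Complex.I*((θ:ℂ)*((m:ℤ):ℝ))) with hFdef
  set f : ℝ → ℂ := 𝓕 (TCc A B) with hfdef
  -- norm bound on f away from 0
  have hf_bound : ∀ θ : ℝ, θ ≠ 0 → ‖f θ‖ ≤ K θ := by
    intro θ hθ
    have habs : (0:ℝ) < |θ| := abs_pos.2 hθ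
    rw [hfdef, fourier_TCc A B θ, norm_mul]
    have h1 : ‖GG ((A:ℝ)-1/2) ((B:ℝ)+1/2) θ‖ ≤ (B:ℝ) - (A:ℝ) + 1 := by
      have := GG_norm_le_length (a := (A:ℝ)-1/2) (b := (B:ℝ)+1/2) (θ := θ) hab
      linarith
    have h1' : ‖GG ((A:ℝ)-1/2) ((B:ℝ)+1/2) θ‖ ≤ 1/(π*|θ|) := GG_norm_le_inv hab hθ
    have h2 : ‖GG (-(1/2)) (1/2) θ‖ ≤ 1 := by
      have := GG_norm_le_length (a := -(1/2:ℝ)) (b := (1/2:ℝ)) (θ := θ) (by norm_num)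
      linarith
    have h2' : ‖GG (-(1/2)) (1/2) θ‖ ≤ 1/(π*|θ|) := GG_norm_le_inv (by norm_num) hθ
    apply le_min
    · calc ‖GG ((A:ℝ)-1/2) ((B:ℝ)+1/2) θ‖ * ‖GG (-(1/2)) (1/2) θ‖
          ≤ ((B:ℝ) - (A:ℝ) + 1) * 1 :=
            mul_le_mul h1 h2 (norm_nonneg _) (by linarith)
        _ ≤ P := by rw [mul_one]; exact hL
    · apply le_min
      · calc ‖GG ((A:ℝ)-1/2) ((B:ℝ)+1/2) θ‖ * ‖GG (-(1/2)) (1/2) θ‖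
            ≤ (1/(π*|θ|)) * 1 := mul_le_mul h1' h2 (norm_nonneg _) (by positivity)
          _ = 1/(π*|θ|) := mul_one _
      · calc ‖GG ((A:ℝ)-1/2) ((B:ℝ)+1/2) θ‖ * ‖GG (-(1/2)) (1/2) θ‖
            ≤ (1/(π*|θ|)) * (1/(π*|θ|)) :=
              mul_le_mul h1' h2' (norm_nonneg _) (by positivity)
          _ = 1/(π^2*θ^2) := by
              rw [div_mul_div_comm, one_mul]
              congr 1
              rw [← _root_.sq_abs θ]; ring
  have hf_cont : Continuous f :=
    VectorFourier.fourierIntegral_continuous Real.continuous_fourierChar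
      (by continuity) (TCc_int A B)
  have hf_int : Integrable f := by
    apply (w_int hP0).mono' hf_cont.aestronglyMeasurable
    filter_upwards [ae_ne_zero] with θ hθ
    exact le_trans (hf_bound θ hθ) (min_le_min le_rfl (min_le_right _ _))
  -- Fourier inversion at integer points
  have hinv : ∀ m : ℤ, TCc A B m = ∫ θ : ℝ,
      Complex.exp (2*(π:ℂ)*Complex.I*((θ:ℂ)*((m:ℤ):ℝ))) * f θ := by
    intro m
    have hi := (TCc_cont A B).fourierInv_fourier_eq (TCc_int A B) (by rw [← hfdef]; exact hf_int)
    have h2 := congrFun hi ((m : ℝ))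
    rw [Real.fourierInv_eq'] at h2
    rw [← h2]
    congr 1; funext θ
    rw [smul_eq_mul, ← hfdef]
    congr 2
    rw [show (inner ℝ θ ((m:ℤ):ℝ) : ℝ) = θ * ((m:ℤ):ℝ) by simp [mul_comm]]
    push_cast
    ring
  -- sum identity
  have hsum1 : (∑ n ∈ Finset.Icc A B, a n) = ∑ m ∈ Finset.Icc Alo Bhi, a m * TCc A B m := by
    rw [← Finset.sum_subset (Finset.Icc_subset_Icc hAlo hBhi) (fun m _ hnot => by
      rw [TCc, TT_int_val, if_neg hnot, Complex.ofReal_zero, mul_zero])]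
    apply Finset.sum_congr rfl
    intro m hm
    rw [TCc, TT_int_val, if_pos hm, Complex.ofReal_one, mul_one]
  have hexp_norm : ∀ (m : ℤ) (θ : ℝ),
      ‖Complex.exp (2*(π:ℂ)*Complex.I*((θ:ℂ)*((m:ℤ):ℝ)))‖ = 1 := by
    intro m θ
    rw [show (2*(π:ℂ)*Complex.I*((θ:ℂ)*((m:ℤ):ℝ))) = ((2*π*(θ*(m:ℝ)) : ℝ):ℂ)*Complex.I by
      push_cast; ring, Complex.norm_exp_ofReal_mul_I]
  have hterm_int : ∀ m : ℤ, Integrable (fun θ : ℝ =>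
      a m * (Complex.exp (2*(π:ℂ)*Complex.I*((θ:ℂ)*((m:ℤ):ℝ))) * f θ)) := by
    intro m
    apply Integrable.const_mul
    apply hf_int.bdd_mul
    · exact (Complex.continuous_exp.comp (continuous_const.mul
        (Complex.continuous_ofReal.mul continuous_const))).aestronglyMeasurable
    · exact ae_of_all _ (fun θ => le_of_eq (hexp_norm m θ))
  have hsum2 : (∑ n ∈ Finset.Icc A B, a n) = ∫ θ : ℝ, f θ * F θ := by
    rw [hsum1]
    rw [Finset.sum_congr rfl (fun m (_ : m ∈ Finset.Icc Alo Bhi) => by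
      rw [hinv m, ← MeasureTheory.integral_const_mul])]
    rw [← MeasureTheory.integral_finset_sum _ (fun m _ => hterm_int m)]
    congr 1; funext θ
    rw [hFdef]
    rw [Finset.mul_sum]
    apply Finset.sum_congr rfl
    intro m _
    ring
  -- F is bounded and measurable
  have hF_cont : Continuous F := by
    rw [hFdef]
    apply continuous_finset_sum
    intro m _
    exact continuous_const.mul (Complex.continuous_exp.comp (continuous_const.mul
      (Complex.continuous_ofReal.mul continuous_const)))
  set C : ℝ := ∑ m ∈ Finset.Icc Alo Bhi, ‖a m‖ with hCdef
  have hF_bdd : ∀ θ : ℝ, ‖F θ‖ ≤ C := by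
    intro θ
    rw [hFdef, hCdef]
    refine le_trans (norm_sum_le _ _) (Finset.sum_le_sum fun m _ => ?_)
    rw [norm_mul, hexp_norm m θ, mul_one]
  have hfF_int : Integrable (fun θ => f θ * F θ) := by
    have h1 : Integrable (fun θ => F θ * f θ) :=
      hf_int.bdd_mul hF_cont.aestronglyMeasurable (ae_of_all _ hF_bdd)
    exact h1.congr (by filter_upwards with θ using mul_comm _ _)
  have hKF_int : Integrable (fun θ => K θ * ‖F θ‖) := by
    apply ((K_int hP0).mul_const C).mono'
    · exact ((K_meas P).mul hF_cont.norm.measurable).aestronglyMeasurable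
    · filter_upwards with θ
      rw [Real.norm_eq_abs, abs_mul, _root_.abs_of_nonneg (K_nonneg hP0 θ), abs_norm]
      exact mul_le_mul_of_nonneg_left (hF_bdd θ) (K_nonneg hP0 θ)
  calc ‖∑ n ∈ Finset.Icc A B, a n‖ = ‖∫ θ : ℝ, f θ * F θ‖ := by rw [hsum2]
    _ ≤ ∫ θ : ℝ, ‖f θ * F θ‖ := norm_integral_le_integral_norm _
    _ ≤ ∫ θ : ℝ, K θ * ‖F θ‖ := by
        apply integral_mono_ae hfF_int.norm hKF_int
        filter_upwards [ae_ne_zero] with θ hθ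
        rw [norm_mul]
        exact mul_le_mul_of_nonneg_right (hf_bound θ hθ) (norm_nonneg _)

end AuxStmt7

open Finset Real

theorem stmt7 (M N N₁ M₁ : ℝ) (h1 : M ≤ N) (h2 : N < N₁) (h3 : N₁ ≤ M₁)
    (a : ℤ → ℂ) :
    ‖∑ n ∈ Finset.Icc (⌊N⌋ + 1) ⌊N₁⌋, a n‖ ≤
      (∫ θ : ℝ, (min (M₁ - M + 1) (min (1 / (π * |θ|)) (1 / (π ^ 2 * θ ^ 2)))) *
        ‖∑ m ∈ Finset.Icc (⌊M⌋ + 1) ⌊M₁⌋,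
          a m * Complex.exp (2 * π * Complex.I * (θ * (m : ℝ)))‖) ∧
    (∫ θ : ℝ, min (M₁ - M + 1) (min (1 / (π * |θ|)) (1 / (π ^ 2 * θ ^ 2)))) ≤
      3 * Real.log (2 + M₁ - M) := by
  have hMM : M < M₁ := lt_of_le_of_lt h1 (lt_of_lt_of_le h2 h3)
  constructor
  · by_cases hcase : ⌊N⌋ + 1 ≤ ⌊N₁⌋
    · apply part1 (⌊N⌋+1) ⌊N₁⌋ (⌊M⌋+1) ⌊M₁⌋ hcase
        (by have := Int.floor_le_floor (R := ℝ) h1; omega)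
        (Int.floor_le_floor h3)
      push_cast
      have e1 : (⌊N₁⌋ : ℝ) ≤ N₁ := Int.floor_le N₁
      have e2 : N < (⌊N⌋ : ℝ) + 1 := Int.lt_floor_add_one N
      linarith
    · rw [Finset.Icc_eq_empty (by omega), Finset.sum_empty, norm_zero]
      apply MeasureTheory.integral_nonneg
      intro θ
      exact mul_nonneg (K_nonneg (by linarith) θ) (norm_nonneg _)
  · rw [show (2 + M₁ - M) = 1 + (M₁ - M + 1) by ring]
    exact part2 (by linarith)
end

section
/- Suppose Y₁ ≥ 1, Y₂ ≥ 1 are real, α is real, and a, q are integers with q ≥ 1, gcd(a,q) = 1 and |α − a/q| ≤ q^{−2}. Then Σ_{1 ≤ n ≤ Y₁} min(Y₁Y₂/n, 1/‖αn‖) ≪ Y₁Y₂·(1/q + 1/Y₂ + q/(Y₁Y₂))·log(2·Y₁·q), with an absolute implied constant, where a term with ‖αn‖ = 0 is interpreted as Y₁Y₂/n (i.e., the second argument of the minimum is then +∞). -/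
open Finset

/-- Distance from a real number to the nearest integer. -/
noncomputable def dnint (x : ℝ) : ℝ := |x - round x|

lemma dnint_nonneg (x : ℝ) : 0 ≤ dnint x := abs_nonneg _

lemma dnint_le_half (x : ℝ) : dnint x ≤ 1/2 := abs_sub_round x

lemma dnint_le (x : ℝ) (m : ℤ) : dnint x ≤ |x - m| := by
  rcases eq_or_ne m (round x) with h | h
  · simp [dnint, h]
  · have h1 : (1:ℝ) ≤ |(m : ℝ) - round x| := by
      have h0 : (m : ℤ) - round x ≠ 0 := sub_ne_zero.2 h
      have := Int.one_le_abs h0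
      calc (1:ℝ) = ((1:ℤ):ℝ) := by norm_num
        _ ≤ ((|m - round x| : ℤ) : ℝ) := by exact_mod_cast this
        _ = |(m:ℝ) - round x| := by push_cast; ring_nf
    have h2 : dnint x ≤ 1/2 := abs_sub_round x
    have h3 : |(m:ℝ) - round x| ≤ |x - m| + |x - round x| := by
      calc |(m:ℝ) - round x| = |(x - round x) - (x - m)| := by ring_nf
        _ ≤ |x - round x| + |x - m| := abs_sub _ _
        _ = |x - m| + |x - round x| := by ring
    unfold dnint at *
    linarith

lemma harm_le (n : ℕ) : ∑ i ∈ Finset.range n, ((i:ℝ)+1)⁻¹ ≤ 1 + Real.log n := by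
  have h := harmonic_le_one_add_log n
  have e : ((harmonic n : ℚ) : ℝ) = ∑ i ∈ Finset.range n, ((i:ℝ)+1)⁻¹ := by
    rw [harmonic]; push_cast
    exact Finset.sum_congr rfl (fun i _ => by ring)
  linarith [e ▸ h]

lemma block_bounds {q n k : ℕ} (hq : 1 ≤ q) (hn1 : 1 ≤ n) (hk : (n-1)/q = k) :
    k*q + 1 ≤ n ∧ n ≤ k*q + q := by
  have h1 : k*q ≤ n - 1 := by rw [← hk]; exact Nat.div_mul_le_self _ _
  have h2 : n - 1 < (k+1) * q := by
    refine (Nat.div_lt_iff_lt_mul (by omega)).1 ?_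
    omega
  have h3 : (k+1)*q = k*q + q := by ring
  rw [h3] at h2
  set K := k*q
  omega

lemma bucket_card (q : ℕ) (hq : 1 ≤ q) (a : ℤ) (hcop : IsCoprime (q:ℤ) a)
    (α : ℝ) (hα : |α - (a:ℝ)/q| ≤ ((q:ℝ)^2)⁻¹) (N k j : ℕ) :
    ((Finset.Icc 1 N).filter
      (fun n => (n-1)/q = k ∧ ⌊(q:ℝ) * dnint (α*n)⌋₊ = j)).card ≤ 10 := by
  have hq0 : (0:ℝ) < q := by exact_mod_cast hq
  set δ : ℝ := α - (a:ℝ)/q with hδ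
  set u : ℝ := δ * k * q^2 with hu
  set b : ℤ := ⌈-u⌉ with hb
  have hb_lo : -u ≤ (b:ℝ) := Int.le_ceil _
  have hb_hi : (b:ℝ) < -u + 1 := Int.ceil_lt_add_one _
  set T : Finset ℤ := Finset.Icc (b+j-2) (b+j+2) ∪ Finset.Icc (b-j-3) (b-j+1) with hT
  have hcard : T.card ≤ 10 := by
    refine le_trans (Finset.card_union_le _ _) ?_
    rw [Int.card_Icc, Int.card_Icc]
    omega
  refine le_trans (Finset.card_le_card_of_injOn
      (fun n => a*n - q*round (α*n)) ?_ ?_) hcard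
  · -- membership
    intro n hn
    simp only [Finset.mem_coe, Finset.mem_filter, Finset.mem_Icc] at hn
    obtain ⟨⟨hn1, hnN⟩, hk, hj⟩ := hn
    obtain ⟨hlo, hhi⟩ := block_bounds hq hn1 hk
    set m : ℤ := round (α*n) with hm
    set e : ℝ := α*(n:ℝ) - m with he
    have hde : dnint (α*n) = |e| := rfl
    have hqd : (j:ℝ) ≤ (q:ℝ) * |e| ∧ (q:ℝ) * |e| < j + 1 := by
      rw [hde] at hj
      have h0 : (0:ℝ) ≤ (q:ℝ) * |e| := by positivity
      exact (Nat.floor_eq_iff h0).1 hj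
    have ht : ((a*n - q*m : ℤ) : ℝ) = q*e - q*δ*n := by
      push_cast [he, hδ]
      field_simp
      ring
    have h1 : |(n:ℝ) - k*q| ≤ q := by
      rw [abs_le]
      constructor
      · have : (k*q + 1 : ℝ) ≤ n := by exact_mod_cast hlo
        nlinarith
      · have : (n:ℝ) ≤ k*q + q := by exact_mod_cast hhi
        linarith
    have h2 : |q*δ*(n - k*q)| ≤ 1 := by
      have e1 : |(q:ℝ)*δ*((n:ℝ) - k*q)| = q * |δ| * |(n:ℝ)-k*q| := by
        rw [abs_mul, abs_mul, abs_of_nonneg hq0.le]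
      rw [e1]
      have e2 : (q:ℝ) * |δ| * |(n:ℝ)-k*q| ≤ q * ((q:ℝ)^2)⁻¹ * q :=
        mul_le_mul (mul_le_mul_of_nonneg_left hα hq0.le) h1 (abs_nonneg _)
          (by positivity)
      have e3 : (q:ℝ) * ((q:ℝ)^2)⁻¹ * q = 1 := by field_simp
      linarith
    have h3 : |q*δ*(n:ℝ) - u| ≤ 1 := by
      have : q*δ*(n:ℝ) - u = q*δ*((n:ℝ) - k*q) := by rw [hu]; ring
      rw [this]; exact h2
    rw [abs_le] at h3
    simp only [Finset.mem_coe, Finset.mem_union, Finset.mem_Icc, hT]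
    rcases le_or_gt 0 e with hce | hce
    · left
      rw [abs_of_nonneg hce] at hqd
      constructor
      · have : ((b+j-2 : ℤ):ℝ) ≤ ((a*n - q*m : ℤ):ℝ) := by
          rw [ht]; push_cast; linarith [hqd.1]
        exact_mod_cast this
      · have : ((a*n - q*m : ℤ):ℝ) ≤ ((b+j+2 : ℤ):ℝ) := by
          rw [ht]; push_cast; linarith [hqd.2]
        exact_mod_cast this
    · right
      rw [abs_of_neg hce] at hqd
      constructor
      · have : ((b-j-3 : ℤ):ℝ) ≤ ((a*n - q*m : ℤ):ℝ) := by
          rw [ht]; push_cast; linarith [hqd.2]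
        exact_mod_cast this
      · have : ((a*n - q*m : ℤ):ℝ) ≤ ((b-j+1 : ℤ):ℝ) := by
          rw [ht]; push_cast; linarith [hqd.1]
        exact_mod_cast this
  · -- injectivity
    intro n hn n' hn' hnn
    simp only [Finset.coe_filter, Set.mem_setOf_eq, Finset.mem_Icc] at hn hn'
    obtain ⟨⟨hn1, _⟩, hk, _⟩ := hn
    obtain ⟨⟨hn1', _⟩, hk', _⟩ := hn'
    obtain ⟨hlo, hhi⟩ := block_bounds hq hn1 hk
    obtain ⟨hlo', hhi'⟩ := block_bounds hq hn1' hk'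
    simp only at hnn
    have hd : (q:ℤ) ∣ a * ((n:ℤ) - n') := by
      refine ⟨round (α*n) - round (α*n'), ?_⟩
      linarith [hnn]
    have hd2 : (q:ℤ) ∣ ((n:ℤ) - n') := hcop.dvd_of_dvd_mul_left hd
    have : ((n:ℤ) - n') = 0 := by
      refine Int.eq_zero_of_abs_lt_dvd hd2 ?_
      rw [abs_lt]
      constructor <;> [zify at hlo hhi hlo' hhi' ⊢; zify at hlo hhi hlo' hhi' ⊢] <;> omega
    omega

lemma bucket00_card (q : ℕ) (hq : 1 ≤ q) (a : ℤ) (hcop : IsCoprime (q:ℤ) a)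
    (α : ℝ) (hα : |α - (a:ℝ)/q| ≤ ((q:ℝ)^2)⁻¹) (N : ℕ) :
    ((Finset.Icc 1 N).filter
      (fun n => (n-1)/q = 0 ∧ ⌊(q:ℝ) * dnint (α*n)⌋₊ = 0)).card ≤ 3 := by
  have hq0 : (0:ℝ) < q := by exact_mod_cast hq
  have hcard : (Finset.Icc (-1:ℤ) 1).card = 3 := by decide
  refine le_trans (Finset.card_le_card_of_injOn
      (fun n => a*n - q*round ((a:ℝ)*n/q)) ?_ ?_) (le_of_eq hcard)
  · intro n hn
    simp only [Finset.mem_coe, Finset.mem_filter, Finset.mem_Icc] at hn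
    obtain ⟨⟨hn1, hnN⟩, hk, hj⟩ := hn
    obtain ⟨hlo, hhi⟩ := block_bounds hq hn1 hk
    simp only [zero_mul, zero_add] at hlo hhi
    have hd_small : dnint (α*n) < 1/q := by
      have h0 : (0:ℝ) ≤ (q:ℝ) * dnint (α*n) :=
        mul_nonneg hq0.le (abs_nonneg _)
      have h4 := ((Nat.floor_eq_iff h0).1 hj).2
      push_cast at h4
      rw [lt_div_iff₀ hq0]
      linarith [h4]
    set y : ℝ := (a:ℝ)*n/q with hy
    set c : ℤ := a*n - q*round y with hc
    have hcr : ((c:ℤ):ℝ) = q*(y - round y) := by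
      push_cast [hc, hy]; field_simp; all_goals ring
    have hdy : dnint y ≤ dnint (α*n) + |(α - (a:ℝ)/q)*n| := by
      have e1 : y - (round (α*n) : ℝ) = (α*n - round (α*n)) - (α - (a:ℝ)/q)*n := by
        rw [hy]; field_simp; ring
      calc dnint y ≤ |y - (round (α*n) : ℝ)| := dnint_le y _
        _ = |(α*n - round (α*n)) - (α - (a:ℝ)/q)*n| := by rw [e1]
        _ ≤ |α*n - round (α*n)| + |(α - (a:ℝ)/q)*n| := abs_sub _ _
        _ = dnint (α*n) + |(α - (a:ℝ)/q)*n| := rfl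
    have hδn : |(α - (a:ℝ)/q)*n| ≤ 1/q := by
      rw [abs_mul]
      have hn_le : |(n:ℝ)| ≤ q := by
        rw [abs_of_nonneg (by positivity)]
        exact_mod_cast hhi
      calc |α - (a:ℝ)/q| * |(n:ℝ)| ≤ ((q:ℝ)^2)⁻¹ * q :=
          mul_le_mul hα hn_le (abs_nonneg _) (by positivity)
        _ = 1/q := by
          rw [pow_two]; field_simp
    have habs : |(c:ℝ)| < 2 := by
      rw [hcr, abs_mul, abs_of_nonneg hq0.le]
      have e5 : |y - (round y : ℝ)| = dnint y := rfl
      rw [e5]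
      have h22 : (2:ℝ)/q = 1/q + 1/q := by ring
      have e6 : dnint y < 2/q := by linarith [hdy, hd_small, hδn]
      have e7 : (q:ℝ) * dnint y < q * (2/q) := mul_lt_mul_of_pos_left e6 hq0
      have e8 : (q:ℝ) * (2/q) = 2 := by field_simp
      linarith
    have hcle : |c| ≤ 1 := by
      have h2 : ((|c|:ℤ):ℝ) < ((2:ℤ):ℝ) := by
        rw [Int.cast_abs]; exact_mod_cast habs
      have h3 : |c| < 2 := by exact_mod_cast h2
      omega
    show c ∈ Finset.Icc (-1:ℤ) 1
    simp only [Finset.mem_Icc]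
    rw [abs_le] at hcle
    exact hcle
  · intro n hn n' hn' hnn
    simp only [Finset.coe_filter, Set.mem_setOf_eq, Finset.mem_Icc] at hn hn'
    obtain ⟨⟨hn1, _⟩, hk, _⟩ := hn
    obtain ⟨⟨hn1', _⟩, hk', _⟩ := hn'
    obtain ⟨hlo, hhi⟩ := block_bounds hq hn1 hk
    obtain ⟨hlo', hhi'⟩ := block_bounds hq hn1' hk'
    simp only [zero_mul, zero_add] at hlo hhi hlo' hhi'
    simp only at hnn
    have hd : (q:ℤ) ∣ a * ((n:ℤ) - n') := by
      refine ⟨round ((a:ℝ)*n/q) - round ((a:ℝ)*n'/q), ?_⟩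
      linarith [hnn]
    have hd2 : (q:ℤ) ∣ ((n:ℤ) - n') := hcop.dvd_of_dvd_mul_left hd
    have : ((n:ℤ) - n') = 0 := by
      refine Int.eq_zero_of_abs_lt_dvd hd2 ?_
      rw [abs_lt]
      constructor <;> [zify at hlo hhi hlo' hhi' ⊢; zify at hlo hhi hlo' hhi' ⊢] <;> omega
    omega

lemma bucket00_bound (q : ℕ) (hq : 1 ≤ q) (a : ℤ) (hcop : IsCoprime (q:ℤ) a)
    (α : ℝ) (hα : |α - (a:ℝ)/q| ≤ ((q:ℝ)^2)⁻¹) (N : ℕ) (X : ℝ) (hX : 1 ≤ X) :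
    ∀ n ∈ (Finset.Icc 1 N).filter
      (fun n => (n-1)/q = 0 ∧ ⌊(q:ℝ) * dnint (α*n)⌋₊ = 0),
      min (X/(n:ℝ)) (if dnint (α*n) = 0 then X/(n:ℝ) else (dnint (α*n))⁻¹)
        ≤ 3*(X/q) + 2*q := by
  intro n hn
  simp only [Finset.mem_filter, Finset.mem_Icc] at hn
  obtain ⟨⟨hn1, hnN⟩, hk, hj⟩ := hn
  obtain ⟨hlo, hhi⟩ := block_bounds hq hn1 hk
  simp only [zero_mul, zero_add] at hlo hhi
  have hq0 : (0:ℝ) < q := by exact_mod_cast hq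
  have hn0 : (0:ℝ) < n := by exact_mod_cast hn1
  have hX0 : (0:ℝ) < X := by linarith
  have hXq0 : (0:ℝ) ≤ X/q := by positivity
  set y : ℝ := (a:ℝ)*n/q with hy
  set c : ℤ := a*n - q*round y with hc
  have hcr : ((c:ℤ):ℝ) = q*(y - round y) := by
    push_cast [hc, hy]; field_simp
  by_cases hc0 : c = 0
  · have hd : (q:ℤ) ∣ a*(n:ℤ) := ⟨round y, by rw [hc] at hc0; linarith [hc0]⟩
    have hd2 : (q:ℤ) ∣ (n:ℤ) := hcop.dvd_of_dvd_mul_left hd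
    have hdn : q ∣ n := Int.natCast_dvd_natCast.mp hd2
    have hnq : n = q := le_antisymm hhi (Nat.le_of_dvd (by omega) hdn)
    calc min (X/(n:ℝ)) (if dnint (α*n) = 0 then X/(n:ℝ) else (dnint (α*n))⁻¹)
        ≤ X/(n:ℝ) := min_le_left _ _
      _ = X/q := by rw [hnq]
      _ ≤ 3*(X/q) + 2*q := by linarith
  · have h1c : (1:ℝ) ≤ |(c:ℝ)| := by
      have := Int.one_le_abs hc0
      calc (1:ℝ) = ((1:ℤ):ℝ) := by norm_num
        _ ≤ ((|c|:ℤ):ℝ) := by exact_mod_cast this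
        _ = |(c:ℝ)| := by rw [Int.cast_abs]
    have hdy_lower : 1/(q:ℝ) ≤ dnint y := by
      have e1 : |(c:ℝ)| = q * dnint y := by
        rw [hcr, abs_mul, abs_of_nonneg hq0.le]; rfl
      rw [e1] at h1c
      rw [div_le_iff₀ hq0]
      linarith [h1c]
    have hdy : dnint y ≤ dnint (α*n) + |(α - (a:ℝ)/q)*n| := by
      have e1 : y - (round (α*n) : ℝ) = (α*n - round (α*n)) - (α - (a:ℝ)/q)*n := by
        rw [hy]; field_simp; ring
      calc dnint y ≤ |y - (round (α*n) : ℝ)| := dnint_le y _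
        _ = |(α*n - round (α*n)) - (α - (a:ℝ)/q)*n| := by rw [e1]
        _ ≤ |α*n - round (α*n)| + |(α - (a:ℝ)/q)*n| := abs_sub _ _
        _ = dnint (α*n) + |(α - (a:ℝ)/q)*n| := rfl
    rcases le_or_gt (2*n) q with h2n | h2n
    · have hδn : |(α - (a:ℝ)/q)*n| ≤ 1/(2*q) := by
        rw [abs_mul]
        have hn_le : |(n:ℝ)| ≤ q/2 := by
          rw [abs_of_nonneg hn0.le]
          have : (2*n:ℝ) ≤ q := by exact_mod_cast h2n
          linarith
        calc |α - (a:ℝ)/q| * |(n:ℝ)| ≤ ((q:ℝ)^2)⁻¹ * (q/2) :=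
            mul_le_mul hα hn_le (abs_nonneg _) (by positivity)
          _ = 1/(2*q) := by rw [pow_two]; field_simp
      have hhalf : (1:ℝ)/q = 1/(2*q) + 1/(2*q) := by ring
      have hlow : 1/(2*(q:ℝ)) ≤ dnint (α*n) := by linarith
      have hpos : 0 < dnint (α*n) := lt_of_lt_of_le (by positivity) hlow
      rw [if_neg (ne_of_gt hpos)]
      calc min (X/(n:ℝ)) (dnint (α*n))⁻¹ ≤ (dnint (α*n))⁻¹ := min_le_right _ _
        _ ≤ (1/(2*(q:ℝ)))⁻¹ := inv_anti₀ (by positivity) hlow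
        _ = 2*q := by rw [one_div, inv_inv]
        _ ≤ 3*(X/q) + 2*q := by linarith
    · calc min (X/(n:ℝ)) (if dnint (α*n) = 0 then X/(n:ℝ) else (dnint (α*n))⁻¹)
          ≤ X/(n:ℝ) := min_le_left _ _
        _ ≤ 3*(X/q) + 2*q := by
          have hqn : (q:ℝ) < 2*n := by exact_mod_cast h2n
          have h5 : X/(n:ℝ) ≤ 2*X/q := by
            rw [div_le_div_iff₀ hn0 hq0]
            nlinarith
          have e : 2*X/(q:ℝ) = 2*(X/q) := by ring
          linarith

set_option maxHeartbeats 1000000 in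
theorem stmt8 : ∃ C : ℝ, 0 < C ∧
    ∀ (Y₁ Y₂ α : ℝ) (a q : ℤ), 1 ≤ q → Int.gcd a q = 1 →
      |α - (a : ℝ) / (q : ℝ)| ≤ ((q : ℝ) ^ 2)⁻¹ → 1 ≤ Y₁ → 1 ≤ Y₂ →
      ∑ n ∈ Finset.Icc 1 ⌊Y₁⌋₊,
          min (Y₁ * Y₂ / (n : ℝ))
            (if dnint (α * n) = 0 then Y₁ * Y₂ / (n : ℝ) else (dnint (α * n))⁻¹)
        ≤ C * (Y₁ * Y₂ * (1 / (q : ℝ) + 1 / Y₂ + (q : ℝ) / (Y₁ * Y₂)) *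
            Real.log (2 * Y₁ * (q : ℝ))) := by
  refine ⟨100, by norm_num, ?_⟩
  intro Y₁ Y₂ α a qZ hqZ hgcd hα hY₁ hY₂
  have hqZ0 : (0:ℤ) ≤ qZ := by linarith
  set q : ℕ := qZ.toNat with hqdef
  have hqq : ((q:ℕ):ℤ) = qZ := Int.toNat_of_nonneg hqZ0
  have hq : 1 ≤ q := by omega
  have hq0 : (0:ℝ) < q := by exact_mod_cast hq
  have hqR : (qZ:ℝ) = (q:ℝ) := by exact_mod_cast hqq.symm
  have hcop : IsCoprime ((q:ℕ):ℤ) a := by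
    rw [hqq]
    exact (Int.isCoprime_iff_gcd_eq_one.2 hgcd).symm
  rw [hqR] at hα ⊢
  set N := ⌊Y₁⌋₊ with hNdef
  have hN1 : 1 ≤ N := Nat.le_floor (by exact_mod_cast hY₁)
  have hNY : (N:ℝ) ≤ Y₁ := Nat.floor_le (by linarith)
  have hN0 : (0:ℝ) < N := by exact_mod_cast hN1
  have hX1 : (1:ℝ) ≤ Y₁ * Y₂ := by nlinarith
  have hX0 : (0:ℝ) < Y₁ * Y₂ := by linarith
  set X := Y₁ * Y₂ with hXdef
  set L := Real.log (2*Y₁*(q:ℝ)) with hLdef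
  have hq1R : (1:ℝ) ≤ (q:ℝ) := by exact_mod_cast hq
  have hm1 : (0:ℝ) ≤ (Y₁-1)*((q:ℝ)-1) := mul_nonneg (by linarith) (by linarith)
  have hm2 : (0:ℝ) ≤ (q:ℝ)*(2*Y₁-1) := mul_nonneg hq0.le (by linarith)
  have hm3 : (0:ℝ) ≤ Y₁*(2*(q:ℝ)-1) := mul_nonneg (by linarith) (by linarith)
  have hL06 : (0.6:ℝ) ≤ L := by
    have h2 : Real.log 2 ≤ L := Real.log_le_log (by norm_num) (by nlinarith [hm1])
    have h3 := Real.log_two_gt_d9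
    linarith
  have hL0 : (0:ℝ) ≤ L := by linarith
  have hlogq : Real.log q ≤ L := Real.log_le_log hq0 (by nlinarith [hm2])
  have hlogN : Real.log N ≤ L := Real.log_le_log hN0 (by nlinarith [hm3, hNY])
  have hA0 : (0:ℝ) ≤ X/q := by positivity
  set K := (N-1)/q with hKdef
  -- fiberwise decomposition
  have hmaps : ∀ n ∈ Finset.Icc 1 N,
      (((n-1)/q, ⌊(q:ℝ) * dnint (α*n)⌋₊) : ℕ×ℕ)
        ∈ Finset.range (K+1) ×ˢ Finset.range (q+1) := by
    intro n hn
    simp only [Finset.mem_Icc] at hn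
    simp only [Finset.mem_product, Finset.mem_range]
    refine ⟨?_, ?_⟩
    · have h1 : (n-1)/q ≤ (N-1)/q := Nat.div_le_div_right (by omega)
      omega
    · have h0 : (0:ℝ) ≤ (q:ℝ) * dnint (α*n) := mul_nonneg hq0.le (dnint_nonneg _)
      have h1 : (q:ℝ) * dnint (α*n) < q+1 := by
        have h2 : dnint (α*n) ≤ 1/2 := dnint_le_half _
        nlinarith
      have h3 : ⌊(q:ℝ) * dnint (α*n)⌋₊ < q+1 := (Nat.floor_lt h0).2 (by push_cast; exact h1)
      omega
  have hfeq : ∀ k j : ℕ, (Finset.Icc 1 N).filter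
      (fun n => (((n-1)/q, ⌊(q:ℝ)*dnint (α*n)⌋₊) : ℕ×ℕ) = (k,j))
      = (Finset.Icc 1 N).filter
        (fun n => (n-1)/q = k ∧ ⌊(q:ℝ)*dnint (α*n)⌋₊ = j) := by
    intro k j
    apply Finset.filter_congr
    intro n _
    simp [Prod.ext_iff]
  have hb1 : ∀ k j : ℕ,
      (∑ n ∈ (Finset.Icc 1 N).filter
          (fun n => (n-1)/q = k ∧ ⌊(q:ℝ)*dnint (α*n)⌋₊ = j+1),
        min (X/(n:ℝ)) (if dnint (α*n) = 0 then X/(n:ℝ) else (dnint (α*n))⁻¹))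
        ≤ 10 * ((q:ℝ)/((j:ℝ)+1)) := by
    intro k j
    have hcard := bucket_card q hq a hcop α hα N k (j+1)
    have hel : ∀ n ∈ (Finset.Icc 1 N).filter
        (fun n => (n-1)/q = k ∧ ⌊(q:ℝ)*dnint (α*n)⌋₊ = j+1),
        min (X/(n:ℝ)) (if dnint (α*n) = 0 then X/(n:ℝ) else (dnint (α*n))⁻¹)
          ≤ (q:ℝ)/((j:ℝ)+1) := by
      intro n hn
      simp only [Finset.mem_filter, Finset.mem_Icc] at hn
      obtain ⟨⟨hn1, hnN⟩, hk, hj⟩ := hn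
      have h0 : (0:ℝ) ≤ (q:ℝ)*dnint (α*n) := mul_nonneg hq0.le (dnint_nonneg _)
      have hge : ((j:ℝ)+1)/q ≤ dnint (α*n) := by
        have h4 := ((Nat.floor_eq_iff h0).1 hj).1
        push_cast at h4
        rw [div_le_iff₀ hq0]
        linarith
      have hpos : 0 < dnint (α*n) := lt_of_lt_of_le (by positivity) hge
      rw [if_neg (ne_of_gt hpos)]
      calc min (X/(n:ℝ)) (dnint (α*n))⁻¹ ≤ (dnint (α*n))⁻¹ := min_le_right _ _
        _ ≤ (((j:ℝ)+1)/q)⁻¹ := inv_anti₀ (by positivity) hge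
        _ = (q:ℝ)/((j:ℝ)+1) := by rw [inv_div]
    refine le_trans (Finset.sum_le_card_nsmul _ _ _ hel) ?_
    rw [nsmul_eq_mul]
    refine mul_le_mul_of_nonneg_right ?_ (by positivity)
    exact_mod_cast hcard
  have hb2 : ∀ k : ℕ,
      (∑ n ∈ (Finset.Icc 1 N).filter
          (fun n => (n-1)/q = k+1 ∧ ⌊(q:ℝ)*dnint (α*n)⌋₊ = 0),
        min (X/(n:ℝ)) (if dnint (α*n) = 0 then X/(n:ℝ) else (dnint (α*n))⁻¹))
        ≤ 10 * ((X/q) * ((k:ℝ)+1)⁻¹) := by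
    intro k
    have hcard := bucket_card q hq a hcop α hα N (k+1) 0
    have hk10 : (0:ℝ) < ((k:ℝ)+1)*q := by positivity
    have hel : ∀ n ∈ (Finset.Icc 1 N).filter
        (fun n => (n-1)/q = k+1 ∧ ⌊(q:ℝ)*dnint (α*n)⌋₊ = 0),
        min (X/(n:ℝ)) (if dnint (α*n) = 0 then X/(n:ℝ) else (dnint (α*n))⁻¹)
          ≤ (X/q) * ((k:ℝ)+1)⁻¹ := by
      intro n hn
      simp only [Finset.mem_filter, Finset.mem_Icc] at hn
      obtain ⟨⟨hn1, hnN⟩, hk, hj⟩ := hn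
      obtain ⟨hlo, hhi⟩ := block_bounds hq hn1 hk
      have hn_ge : (((k:ℝ)+1)*q) ≤ n := by
        have h6 : (k+1)*q ≤ n := by omega
        exact_mod_cast h6
      have heq : X/(((k:ℝ)+1)*q) = (X/q) * ((k:ℝ)+1)⁻¹ := by
        rw [mul_comm ((k:ℝ)+1) (q:ℝ), ← div_div, div_eq_mul_inv (X/(q:ℝ))]
      refine le_trans (min_le_left _ _) ?_
      rw [← heq]
      exact div_le_div_of_nonneg_left hX0.le hk10 hn_ge
    refine le_trans (Finset.sum_le_card_nsmul _ _ _ hel) ?_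
    rw [nsmul_eq_mul]
    refine mul_le_mul_of_nonneg_right ?_ (by positivity)
    exact_mod_cast hcard
  have hb00 :
      (∑ n ∈ (Finset.Icc 1 N).filter
          (fun n => (n-1)/q = 0 ∧ ⌊(q:ℝ)*dnint (α*n)⌋₊ = 0),
        min (X/(n:ℝ)) (if dnint (α*n) = 0 then X/(n:ℝ) else (dnint (α*n))⁻¹))
        ≤ 3 * (3*(X/q) + 2*(q:ℝ)) := by
    have hel := bucket00_bound q hq a hcop α hα N X hX1
    have hcard := bucket00_card q hq a hcop α hα N
    refine le_trans (Finset.sum_le_card_nsmul _ _ _ hel) ?_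
    rw [nsmul_eq_mul]
    refine mul_le_mul_of_nonneg_right ?_ (by positivity)
    exact_mod_cast hcard
  -- the grand decomposition
  have hdecomp := Finset.sum_fiberwise_of_maps_to hmaps
      (fun n : ℕ => min (X/(n:ℝ))
        (if dnint (α*n) = 0 then X/(n:ℝ) else (dnint (α*n))⁻¹))
  calc ∑ n ∈ Finset.Icc 1 N,
        min (X/(n:ℝ)) (if dnint (α*n) = 0 then X/(n:ℝ) else (dnint (α*n))⁻¹)
      = ∑ p ∈ Finset.range (K+1) ×ˢ Finset.range (q+1),
          ∑ n ∈ (Finset.Icc 1 N).filter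
            (fun n => (((n-1)/q, ⌊(q:ℝ)*dnint (α*n)⌋₊) : ℕ×ℕ) = p),
          min (X/(n:ℝ)) (if dnint (α*n) = 0 then X/(n:ℝ) else (dnint (α*n))⁻¹) :=
        hdecomp.symm
    _ = ∑ k ∈ Finset.range (K+1), ∑ j ∈ Finset.range (q+1),
          ∑ n ∈ (Finset.Icc 1 N).filter
            (fun n => (n-1)/q = k ∧ ⌊(q:ℝ)*dnint (α*n)⌋₊ = j),
          min (X/(n:ℝ)) (if dnint (α*n) = 0 then X/(n:ℝ) else (dnint (α*n))⁻¹) := by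
        rw [Finset.sum_product]
        exact Finset.sum_congr rfl fun k _ => Finset.sum_congr rfl fun j _ => by
          rw [hfeq k j]
    _ ≤ ∑ k ∈ Finset.range (K+1),
          ((∑ n ∈ (Finset.Icc 1 N).filter
            (fun n => (n-1)/q = k ∧ ⌊(q:ℝ)*dnint (α*n)⌋₊ = 0),
            min (X/(n:ℝ)) (if dnint (α*n) = 0 then X/(n:ℝ) else (dnint (α*n))⁻¹))
            + 10*(q:ℝ)*(1 + Real.log q)) := by
        refine Finset.sum_le_sum fun k _ => ?_
        rw [Finset.sum_range_succ']
        have h1 : (∑ j ∈ Finset.range q,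
            ∑ n ∈ (Finset.Icc 1 N).filter
              (fun n => (n-1)/q = k ∧ ⌊(q:ℝ)*dnint (α*n)⌋₊ = j+1),
            min (X/(n:ℝ)) (if dnint (α*n) = 0 then X/(n:ℝ) else (dnint (α*n))⁻¹))
            ≤ ∑ j ∈ Finset.range q, 10 * ((q:ℝ)/((j:ℝ)+1)) :=
          Finset.sum_le_sum fun j _ => hb1 k j
        have h2 : ∑ j ∈ Finset.range q, 10 * ((q:ℝ)/((j:ℝ)+1))
            = 10*(q:ℝ) * ∑ j ∈ Finset.range q, ((j:ℝ)+1)⁻¹ := by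
          rw [Finset.mul_sum]
          exact Finset.sum_congr rfl fun j _ => by rw [div_eq_mul_inv]; ring
        have h3 : 10*(q:ℝ) * (∑ j ∈ Finset.range q, ((j:ℝ)+1)⁻¹)
            ≤ 10*(q:ℝ)*(1 + Real.log q) :=
          mul_le_mul_of_nonneg_left (harm_le q) (by positivity)
        rw [h2] at h1
        linarith
    _ = (∑ k ∈ Finset.range (K+1),
          ∑ n ∈ (Finset.Icc 1 N).filter
            (fun n => (n-1)/q = k ∧ ⌊(q:ℝ)*dnint (α*n)⌋₊ = 0),
          min (X/(n:ℝ)) (if dnint (α*n) = 0 then X/(n:ℝ) else (dnint (α*n))⁻¹))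
          + ((K:ℝ)+1) * (10*(q:ℝ)*(1 + Real.log q)) := by
        rw [Finset.sum_add_distrib, Finset.sum_const, Finset.card_range,
          nsmul_eq_mul]
        push_cast
        ring
    _ ≤ (3 * (3*(X/q) + 2*(q:ℝ)) + 10*(X/q)*(1 + Real.log N))
          + ((K:ℝ)+1) * (10*(q:ℝ)*(1 + Real.log q)) := by
        have hsplit : ∑ k ∈ Finset.range (K+1),
            ∑ n ∈ (Finset.Icc 1 N).filter
              (fun n => (n-1)/q = k ∧ ⌊(q:ℝ)*dnint (α*n)⌋₊ = 0),
            min (X/(n:ℝ)) (if dnint (α*n) = 0 then X/(n:ℝ) else (dnint (α*n))⁻¹)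
            = (∑ k ∈ Finset.range K,
              ∑ n ∈ (Finset.Icc 1 N).filter
                (fun n => (n-1)/q = k+1 ∧ ⌊(q:ℝ)*dnint (α*n)⌋₊ = 0),
              min (X/(n:ℝ)) (if dnint (α*n) = 0 then X/(n:ℝ) else (dnint (α*n))⁻¹))
              + ∑ n ∈ (Finset.Icc 1 N).filter
                (fun n => (n-1)/q = 0 ∧ ⌊(q:ℝ)*dnint (α*n)⌋₊ = 0),
              min (X/(n:ℝ)) (if dnint (α*n) = 0 then X/(n:ℝ) else (dnint (α*n))⁻¹) :=
          Finset.sum_range_succ' _ K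
        have htail : (∑ k ∈ Finset.range K,
            ∑ n ∈ (Finset.Icc 1 N).filter
              (fun n => (n-1)/q = k+1 ∧ ⌊(q:ℝ)*dnint (α*n)⌋₊ = 0),
            min (X/(n:ℝ)) (if dnint (α*n) = 0 then X/(n:ℝ) else (dnint (α*n))⁻¹))
            ≤ 10*(X/q)*(1 + Real.log N) := by
          have t1 : (∑ k ∈ Finset.range K,
              ∑ n ∈ (Finset.Icc 1 N).filter
                (fun n => (n-1)/q = k+1 ∧ ⌊(q:ℝ)*dnint (α*n)⌋₊ = 0),
              min (X/(n:ℝ)) (if dnint (α*n) = 0 then X/(n:ℝ) else (dnint (α*n))⁻¹))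
              ≤ ∑ k ∈ Finset.range K, 10 * ((X/q) * ((k:ℝ)+1)⁻¹) :=
            Finset.sum_le_sum fun k _ => hb2 k
          have t2 : ∑ k ∈ Finset.range K, 10 * ((X/q) * ((k:ℝ)+1)⁻¹)
              = 10*(X/q) * ∑ k ∈ Finset.range K, ((k:ℝ)+1)⁻¹ := by
            rw [Finset.mul_sum]
            exact Finset.sum_congr rfl fun k _ => by ring
          have t3 : (∑ k ∈ Finset.range K, ((k:ℝ)+1)⁻¹) ≤ 1 + Real.log K := harm_le K
          have t4 : Real.log K ≤ Real.log N := by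
            rcases Nat.eq_zero_or_pos K with h | h
            · rw [h]
              simp only [Nat.cast_zero, Real.log_zero]
              exact Real.log_nonneg (by exact_mod_cast hN1)
            · refine Real.log_le_log (by exact_mod_cast h) ?_
              have : K ≤ N := le_trans (Nat.div_le_self _ _) (by omega)
              exact_mod_cast this
          have t5 : 10*(X/q) * (∑ k ∈ Finset.range K, ((k:ℝ)+1)⁻¹)
              ≤ 10*(X/q)*(1 + Real.log N) :=
            mul_le_mul_of_nonneg_left (by linarith) (by positivity)
          rw [t2] at t1
          linarith
        rw [hsplit]
        linarith [hb00]
    _ ≤ 100 * ((X/q + Y₁ + (q:ℝ)) * L) := by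
        have hlogq0 : (0:ℝ) ≤ Real.log q := Real.log_nonneg (by exact_mod_cast hq)
        have hlogN0 : (0:ℝ) ≤ Real.log N := Real.log_nonneg (by exact_mod_cast hN1)
        have hKq : ((K:ℝ)+1)*q ≤ (N:ℝ) + q := by
          have h1 : K*q ≤ N-1 := Nat.div_mul_le_self _ _
          have h2 : (K+1)*q ≤ N + q := by
            have h3 : (K+1)*q = K*q+q := by ring
            rw [h3]
            omega
          exact_mod_cast h2
        have c2 : ((K:ℝ)+1)*(10*(q:ℝ)*(1+Real.log q)) ≤ ((N:ℝ)+q)*(30*L) := by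
          have e : ((K:ℝ)+1)*(10*(q:ℝ)*(1+Real.log q))
              = (((K:ℝ)+1)*q)*(10*(1+Real.log q)) := by ring
          rw [e]
          calc (((K:ℝ)+1)*q)*(10*(1+Real.log q))
              ≤ ((N:ℝ)+q)*(10*(1+Real.log q)) :=
                mul_le_mul_of_nonneg_right hKq (by linarith)
            _ ≤ ((N:ℝ)+q)*(30*L) := by
                refine mul_le_mul_of_nonneg_left ?_ (by positivity)
                linarith
        have p1 : (0:ℝ) ≤ (X/q)*(15*L-9) := mul_nonneg hA0 (by linarith)
        have p2 : (0:ℝ) ≤ (q:ℝ)*(10*L-6) := mul_nonneg hq0.le (by linarith)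
        have p3 : (0:ℝ) ≤ (X/q)*(3*L - (1+Real.log N)) :=
          mul_nonneg hA0 (by linarith)
        have p4 : (0:ℝ) ≤ (Y₁ - (N:ℝ))*L := mul_nonneg (by linarith) hL0
        have p5 : (0:ℝ) ≤ (X/q)*L := mul_nonneg hA0 hL0
        have p6 : (0:ℝ) ≤ (q:ℝ)*L := mul_nonneg hq0.le hL0
        have p7 : (0:ℝ) ≤ Y₁*L := mul_nonneg (by linarith) hL0
        nlinarith [c2, p1, p2, p3, p4, p5, p6, p7]
    _ = 100 * (X * (1/(q:ℝ) + 1/Y₂ + (q:ℝ)/X) * L) := by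
        have hY₂0 : Y₂ ≠ 0 := by linarith
        have hq0' : (q:ℝ) ≠ 0 := ne_of_gt hq0
        have hX0' : X ≠ 0 := ne_of_gt hX0
        have : X * (1/(q:ℝ) + 1/Y₂ + (q:ℝ)/X) = X/q + Y₁ + q := by
          rw [hXdef]
          field_simp
        rw [this]
end
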